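/- If B₋ and B₊ are blue intervals and C is a red-ended coloured-interval with |B₋| > r(C) and |B₊| > r(C), then the closure of B₋ + C + B₊ is a single blue interval. -/

import Mathlib

open scoped Classical

/-- A recolouring step: the configuration (list of lengths of monochromatic intervals,
with colours alternating, determined by the colour of the first interval) contains three
consecutive intervals of lengths `a`, `b`, `c`, and the middle one, being strictly shorter
than both neighbours, is recoloured, merging the three into one of length `a + b + c`. -/
structure Step where
  pre : List ℝ
  a : ℝ
  b : ℝ
  c : ℝ
  post : List ℝ

namespace Step

/-- The configuration before the recolouring step. -/
def src (s : Step) : List ℝ := s.pre ++ s.a :: s.b :: s.c :: s.post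

/-- The configuration after the recolouring step. -/
def tgt (s : Step) : List ℝ := s.pre ++ (s.a + s.b + s.c) :: s.post

/-- A step is valid if the middle interval is strictly shorter than both neighbours. -/
def Valid (s : Step) : Prop := s.b < s.a ∧ s.b < s.c

/-- The set of points (identifying a configuration with a partition of `(0, total length]`
into half-open intervals) that get recoloured by the step: the middle interval. -/
def middle (s : Step) : Set ℝ :=
  Set.Ioc (s.pre.sum + s.a) (s.pre.sum + s.a + s.b)

end Step

/-- `Reduces l steps m`: starting from configuration `l`, performing the given sequence of
valid recolouring steps yields configuration `m`. -/
inductive Reduces : List ℝ → List Step → List ℝ → Prop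
  | nil (l : List ℝ) : Reduces l [] l
  | cons (s : Step) (hs : s.Valid) {steps : List Step} {m : List ℝ} :
      Reduces s.tgt steps m → Reduces s.src (s :: steps) m

/-- A configuration is closed if no further recolouring is possible; a sequence of
recolourings ending in a closed configuration is complete. -/
def IsClosedConfig (l : List ℝ) : Prop := ∀ s : Step, s.Valid → s.src ≠ l

/-- The number of times the point `x` is recoloured during a sequence of steps. -/
noncomputable def recolourCount (steps : List Step) (x : ℝ) : ℕ :=
  (steps.filter fun s => decide (x ∈ s.middle)).length

/-- Non-degeneracy: with `p_i` the boundary points (partial sums of the lengths),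
no two gap-distances coincide, i.e. `p_j - p_i ≠ p_k - p_j` for `i < j < k`. -/
def Nondegenerate (l : List ℝ) : Prop :=
  ∀ i j k : ℕ, i < j → j < k → k ≤ l.length →
    (l.take j).sum - (l.take i).sum ≠ (l.take k).sum - (l.take j).sum

/-- For a red-ended configuration (a list of lengths of odd length, the intervals at even
indices being red and those at odd indices blue), the total length of the red intervals. -/
def redSum (l : List ℝ) : ℝ :=
  ∑ i ∈ Finset.range l.length, if i % 2 = 0 then l.getD i 0 else 0

/- ================  basic lemmas  ================ -/

lemma Step.tgt_sum (s : Step) : s.tgt.sum = s.src.sum := by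
  simp [Step.src, Step.tgt]; ring

lemma Step.src_length (s : Step) : s.src.length = s.pre.length + 3 + s.post.length := by
  simp [Step.src]; omega

lemma Step.tgt_length (s : Step) : s.tgt.length = s.pre.length + 1 + s.post.length := by
  simp [Step.tgt]; omega

lemma Step.tgt_pos (s : Step) (h : ∀ x ∈ s.src, 0 < x) : ∀ x ∈ s.tgt, 0 < x := by
  have ha : 0 < s.a := h s.a (by simp [Step.src])
  have hb : 0 < s.b := h s.b (by simp [Step.src])
  have hc : 0 < s.c := h s.c (by simp [Step.src])
  intro x hx
  simp only [Step.tgt, List.mem_append, List.mem_cons] at hx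
  rcases hx with hx | hx | hx
  · exact h x (by simp [Step.src, hx])
  · subst hx; linarith
  · exact h x (by simp [Step.src, hx])

lemma Reduces.sum_eq {l s m} (h : Reduces l s m) : m.sum = l.sum := by
  induction h with
  | nil => rfl
  | cons s hs _ ih => rw [ih, Step.tgt_sum]

lemma Reduces.pos {l s m} (h : Reduces l s m) (hp : ∀ x ∈ l, 0 < x) : ∀ x ∈ m, 0 < x := by
  induction h with
  | nil => exact hp
  | cons s hs _ ih => exact ih (s.tgt_pos hp)

lemma Reduces.length_eq {l s m} (h : Reduces l s m) : m.length + 2 * s.length = l.length := by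
  induction h with
  | nil => simp
  | cons s hs _ ih => simp only [List.length_cons, Step.src_length]; rw [Step.tgt_length] at ih; omega

lemma Reduces.append {l k m s₁ s₂} (h₁ : Reduces l s₁ k) (h₂ : Reduces k s₂ m) :
    Reduces l (s₁ ++ s₂) m := by
  induction h₁ with
  | nil => simpa
  | cons s hs _ ih => exact Reduces.cons s hs (ih h₂)

lemma exists_closed (l : List ℝ) : ∃ s m, Reduces l s m ∧ IsClosedConfig m := by
  by_cases hcl : IsClosedConfig l
  · exact ⟨[], l, Reduces.nil l, hcl⟩
  · unfold IsClosedConfig at hcl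
    push_neg at hcl
    obtain ⟨t, ht, hsrc⟩ := hcl
    have hlen : t.tgt.length < l.length := by
      rw [← hsrc, Step.src_length, Step.tgt_length]; omega
    obtain ⟨s, m, hr, hm⟩ := exists_closed t.tgt
    exact ⟨t :: s, m, hsrc ▸ Reduces.cons t ht hr, hm⟩
termination_by l.length

lemma singleton_closed (x : ℝ) : IsClosedConfig [x] := by
  intro s hs hsrc
  have := congrArg List.length hsrc
  rw [Step.src_length] at this
  simp at this; omega

/- ================  local confluence  ================ -/

lemma join_of_le (t₁ t₂ : Step) (h : t₁.src = t₂.src) (hv₁ : t₁.Valid) (hv₂ : t₂.Valid)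
    (hpos : ∀ x ∈ t₁.src, 0 < x) (hle : t₁.pre.length ≤ t₂.pre.length) :
    t₁.tgt = t₂.tgt ∨ ∃ u₁ u₂ : Step, u₁.Valid ∧ u₂.Valid ∧ u₁.src = t₁.tgt ∧
      u₂.src = t₂.tgt ∧ u₁.tgt = u₂.tgt := by
  obtain ⟨p₁, a₁, b₁, c₁, q₁⟩ := t₁
  obtain ⟨p₂, a₂, b₂, c₂, q₂⟩ := t₂
  simp only [Step.src] at h hpos
  simp only [Step.Valid] at hv₁ hv₂
  simp only at hle ⊢
  rw [List.append_eq_append_iff] at h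
  rcases h with ⟨mid, hp₂, hrest⟩ | ⟨mid, hp₁, hrest⟩
  swap
  · -- p₁ = p₂ ++ mid, and |p₁| ≤ |p₂| forces mid = []
    have : mid.length = 0 := by
      have := congrArg List.length hp₁; simp at this; omega
    rw [List.length_eq_zero_iff] at this
    subst this
    simp at hp₁ hrest
    obtain ⟨rfl, rfl, rfl, rfl⟩ := hrest
    left; rw [hp₁]
  · -- p₂ = p₁ ++ mid
    subst hp₂
    match mid, hrest with
    | [], hrest =>
      simp at hrest
      obtain ⟨rfl, rfl, rfl, rfl⟩ := hrest
      left; simp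
    | [x], hrest =>
      simp at hrest
      obtain ⟨rfl, rfl, rfl, rfl⟩ := hrest
      -- b₁ = a₂, c₁ = b₂ ; hv₁.2 : b₁ < c₁, hv₂.1 : b₂ < a₂, i.e. c₁ < b₁
      exfalso; linarith [hv₁.2, hv₂.1]
    | [x, y], hrest =>
      simp at hrest
      obtain ⟨rfl, rfl, rfl, rfl, rfl⟩ := hrest
      -- x = a₁, y = b₁, a₂ = c₁, q₁ = b₂ :: c₂ :: q₂
      right
      have ha₁ : 0 < a₁ := hpos a₁ (by simp)
      have hb₁ : 0 < b₁ := hpos b₁ (by simp)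
      have hb₂ : 0 < b₂ := hpos b₂ (by simp)
      have hc₂ : 0 < c₂ := hpos c₂ (by simp)
      refine ⟨⟨p₁, a₁ + b₁ + c₁, b₂, c₂, q₂⟩, ⟨p₁, a₁, b₁, c₁ + b₂ + c₂, q₂⟩, ?_, ?_, ?_, ?_, ?_⟩
      · constructor <;> · dsimp only; linarith [hv₂.1, hv₂.2]
      · constructor <;> · dsimp only; linarith [hv₁.1, hv₁.2]
      · simp [Step.src, Step.tgt]
      · simp [Step.src, Step.tgt]
      · show p₁ ++ (a₁ + b₁ + c₁ + b₂ + c₂) :: q₂ = p₁ ++ (a₁ + b₁ + (c₁ + b₂ + c₂)) :: q₂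
        rw [show a₁ + b₁ + c₁ + b₂ + c₂ = a₁ + b₁ + (c₁ + b₂ + c₂) by ring]
    | x :: y :: z :: rest, hrest =>
      simp at hrest
      obtain ⟨rfl, rfl, rfl, rfl⟩ := hrest
      right
      refine ⟨⟨p₁ ++ (a₁ + b₁ + c₁) :: rest, a₂, b₂, c₂, q₂⟩,
              ⟨p₁, a₁, b₁, c₁, rest ++ (a₂ + b₂ + c₂) :: q₂⟩, hv₂, hv₁, ?_, ?_, ?_⟩
      · simp [Step.src, Step.tgt]
      · simp [Step.src, Step.tgt]
      · simp [Step.tgt]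

lemma join (t₁ t₂ : Step) (h : t₁.src = t₂.src) (hv₁ : t₁.Valid) (hv₂ : t₂.Valid)
    (hpos : ∀ x ∈ t₁.src, 0 < x) :
    t₁.tgt = t₂.tgt ∨ ∃ u₁ u₂ : Step, u₁.Valid ∧ u₂.Valid ∧ u₁.src = t₁.tgt ∧
      u₂.src = t₂.tgt ∧ u₁.tgt = u₂.tgt := by
  rcases le_total t₁.pre.length t₂.pre.length with hle | hle
  · exact join_of_le t₁ t₂ h hv₁ hv₂ hpos hle
  · rcases join_of_le t₂ t₁ h.symm hv₂ hv₁ (h ▸ hpos) hle with heq | ⟨u₁, u₂, h1, h2, h3, h4, h5⟩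
    · exact Or.inl heq.symm
    · exact Or.inr ⟨u₂, u₁, h2, h1, h4, h3, h5.symm⟩

lemma Reduces.nil_inv {l m : List ℝ} (h : Reduces l [] m) : m = l := by
  cases h; rfl

lemma Reduces.cons_inv {l : List ℝ} {t : Step} {s : List Step} {m : List ℝ}
    (h : Reduces l (t :: s) m) : t.src = l ∧ t.Valid ∧ Reduces t.tgt s m := by
  cases h with
  | cons s hs h' => exact ⟨rfl, hs, h'⟩

lemma normal_unique : ∀ n (l : List ℝ), l.length = n → (∀ x ∈ l, 0 < x) →
    ∀ {s₁ m₁ s₂ m₂}, Reduces l s₁ m₁ → Reduces l s₂ m₂ →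
    IsClosedConfig m₁ → IsClosedConfig m₂ → m₁ = m₂ := by
  intro n
  induction n using Nat.strong_induction_on with
  | _ n IH =>
    intro l hlen hpos s₁ m₁ s₂ m₂ h₁ h₂ hc₁ hc₂
    cases h₁ with
    | nil =>
      cases h₂ with
      | nil => rfl
      | cons t₂ ht₂ h₂' => exact absurd rfl (hc₁ t₂ ht₂)
    | cons t₁ ht₁ h₁' =>
      cases s₂ with
      | nil => exact absurd h₂.nil_inv.symm (hc₂ t₁ ht₁)
      | cons t₂ s₂' =>
        obtain ⟨hsrc, ht₂, h₂'⟩ := h₂.cons_inv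
        -- t₂.src = t₁.src
        have hlen₁ : t₁.tgt.length < n := by
          rw [← hlen, Step.src_length, Step.tgt_length]; omega
        have hpos₁ : ∀ x ∈ t₁.tgt, 0 < x := t₁.tgt_pos hpos
        have hpos₂ : ∀ x ∈ t₂.tgt, 0 < x := t₂.tgt_pos (hsrc ▸ hpos)
        have hlen₂ : t₂.tgt.length < n := by
          have := congrArg List.length hsrc
          rw [Step.src_length, Step.src_length] at this
          rw [← hlen, Step.src_length, Step.tgt_length]; omega
        rcases join t₂ t₁ hsrc ht₂ ht₁ (hsrc ▸ hpos) with heq | ⟨u₂, u₁, hu₂, hu₁, hs₂, hs₁, htgt⟩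
        · exact IH _ hlen₁ t₁.tgt rfl hpos₁ h₁' (heq ▸ h₂') hc₁ hc₂
        · obtain ⟨s₃, k, h₃, hk⟩ := exists_closed u₁.tgt
          have r₁ : Reduces t₁.tgt (u₁ :: s₃) k := hs₁ ▸ Reduces.cons u₁ hu₁ h₃
          have r₂ : Reduces t₂.tgt (u₂ :: s₃) k := hs₂ ▸ Reduces.cons u₂ hu₂ (htgt ▸ h₃)
          have e₁ : m₁ = k := IH _ hlen₁ t₁.tgt rfl hpos₁ h₁' r₁ hc₁ hk
          have e₂ : m₂ = k := IH _ hlen₂ t₂.tgt rfl hpos₂ h₂' r₂ hc₂ hk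
          rw [e₁, e₂]

/- ================  partial sums embed  ================ -/

lemma step_take (s : Step) : ∃ f : ℕ → ℕ, StrictMono f ∧ f s.tgt.length ≤ s.src.length ∧
    ∀ j, (s.tgt.take j).sum = (s.src.take (f j)).sum := by
  refine ⟨fun j => if j ≤ s.pre.length then j else j + 2, ?_, ?_, ?_⟩
  · intro i j hij
    simp only
    split_ifs <;> omega
  · have hno : ¬ (s.tgt.length ≤ s.pre.length) := by rw [Step.tgt_length]; omega
    simp only [if_neg hno]
    rw [Step.src_length, Step.tgt_length]
    omega
  · intro j
    simp only
    split_ifs with hj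
    · -- j ≤ pre.length : both takes are pre.take j
      rw [Step.src, Step.tgt, List.take_append, List.take_append]
      have : j - s.pre.length = 0 := by omega
      rw [this]
      simp
    · obtain ⟨k, rfl⟩ : ∃ k, j = s.pre.length + 1 + k := ⟨j - s.pre.length - 1, by omega⟩
      have h1 : s.pre.length + 1 + k - s.pre.length = k + 1 := by omega
      have h2 : s.pre.length + 1 + k + 2 - s.pre.length = k + 3 := by omega
      have e1 : List.take (s.pre.length + 1 + k) s.tgt =
          s.pre ++ (s.a + s.b + s.c) :: s.post.take k := by
        rw [Step.tgt, List.take_append, List.take_of_length_le (by omega), h1,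
          List.take_succ_cons]
      have e2 : List.take (s.pre.length + 1 + k + 2) s.src =
          s.pre ++ s.a :: s.b :: s.c :: s.post.take k := by
        rw [Step.src, List.take_append, List.take_of_length_le (by omega), h2,
          List.take_succ_cons, List.take_succ_cons, List.take_succ_cons]
      rw [e1, e2]
      simp only [List.sum_append, List.sum_cons]
      ring

lemma reduces_take {l s m} (h : Reduces l s m) :
    ∃ f : ℕ → ℕ, StrictMono f ∧ f m.length ≤ l.length ∧
      ∀ j, (m.take j).sum = (l.take (f j)).sum := by
  induction h with
  | nil => exact ⟨id, strictMono_id, le_rfl, fun j => rfl⟩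
  | cons s hs h ih =>
    obtain ⟨f, hf, hfl, hft⟩ := ih
    obtain ⟨g, hg, hgl, hgt⟩ := step_take s
    refine ⟨g ∘ f, hg.comp hf, ?_, ?_⟩
    · exact le_trans (hg.monotone hfl) hgl
    · intro j
      rw [hft j, hgt (f j)]; rfl

lemma adj_ne {l : List ℝ} {bm bp : ℝ} (hnd : Nondegenerate (bm :: l ++ [bp]))
    {s m} (h : Reduces l s m) :
    ∀ i, i + 1 < m.length → m.getD i 0 ≠ m.getD (i + 1) 0 := by
  obtain ⟨f, hf, hfl, hft⟩ := reduces_take h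
  intro i hi
  have h2 : i + 2 ≤ m.length := by omega
  have hfi : f (i + 2) ≤ l.length := le_trans (hf.monotone h2) hfl
  have flank_take : ∀ k ≤ l.length, ((bm :: l ++ [bp]).take (k + 1)).sum = bm + (l.take k).sum := by
    intro k hk
    rw [List.cons_append, List.take_succ_cons, List.take_append]
    have : k - l.length = 0 := by omega
    rw [this]
    simp
  have key := hnd (f i + 1) (f (i + 1) + 1) (f (i + 2) + 1)
    (by have := hf (by omega : i < i + 1); omega)
    (by have := hf (by omega : i + 1 < i + 2); omega)
    (by simp only [List.length_append, List.cons_append, List.length_cons]; simp; omega)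
  rw [flank_take _ (le_trans (hf.monotone (by omega : i ≤ i + 2)) hfi),
      flank_take _ (le_trans (hf.monotone (by omega : i + 1 ≤ i + 2)) hfi),
      flank_take _ hfi] at key
  rw [← hft i, ← hft (i + 1), ← hft (i + 2)] at key
  rw [List.sum_take_succ _ _ (by omega), List.sum_take_succ _ _ (by omega),
      List.sum_take_succ _ _ (by omega)] at key
  rw [List.getD_eq_getElem _ _ (by omega : i < m.length),
      List.getD_eq_getElem _ _ (by omega : i + 1 < m.length)]
  intro hcontra
  apply key
  rw [← hcontra]
  ring_nf

/- ================  redSum lemmas  ================ -/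

lemma redSum_singleton (r : ℝ) : redSum [r] = r := by
  simp [redSum]

lemma redSum_cons_cons (a b : ℝ) (t : List ℝ) : redSum (a :: b :: t) = a + redSum t := by
  unfold redSum
  simp only [List.length_cons]
  rw [show t.length + 1 + 1 = (t.length + 1) + 1 by rfl, Finset.sum_range_succ',
    Finset.sum_range_succ']
  have h1 : ∀ i, (if (i + 1 + 1) % 2 = 0 then (a :: b :: t).getD (i + 1 + 1) 0 else 0) =
      (if i % 2 = 0 then t.getD i 0 else 0) := by
    intro i
    have : (i + 1 + 1) % 2 = i % 2 := by omega
    rw [this]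
    simp [List.getD_cons_succ]
  simp only [h1]
  simp
  ring

lemma redSum_nonneg {t : List ℝ} (h : ∀ x ∈ t, 0 < x) : 0 ≤ redSum t := by
  unfold redSum
  apply Finset.sum_nonneg
  intro i hi
  simp only [Finset.mem_range] at hi
  split_ifs
  · rw [List.getD_eq_getElem _ _ hi]
    exact le_of_lt (h _ (List.getElem_mem hi))
  · exact le_refl 0

lemma redSum_append_pair {t : List ℝ} (b r : ℝ) (hodd : t.length % 2 = 1) :
    redSum (t ++ [b, r]) = redSum t + r := by
  unfold redSum
  simp only [List.length_append, List.length_cons, List.length_nil]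
  rw [show t.length + 2 = (t.length + 1) + 1 by rfl, Finset.sum_range_succ,
    Finset.sum_range_succ]
  have e1 : ∀ i < t.length, (t ++ [b, r]).getD i 0 = t.getD i 0 :=
    fun i hi => List.getD_append _ _ _ _ hi
  have e2 : (t ++ [b, r]).getD t.length 0 = b := by
    rw [List.getD_append_right _ _ _ _ le_rfl]
    simp
  have e3 : (t ++ [b, r]).getD (t.length + 1) 0 = r := by
    rw [List.getD_append_right _ _ _ _ (by omega)]
    have : t.length + 1 - t.length = 1 := by omega
    rw [this]
    simp
  rw [e2, e3, if_neg (by omega), if_pos (by omega)]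
  rw [Finset.sum_congr rfl fun i hi => by
    rw [e1 i (Finset.mem_range.mp hi)]]
  ring

/- ================  pointwise closedness  ================ -/

def PtClosed (k : List ℝ) : Prop :=
  ∀ i, i + 2 < k.length → ¬(k.getD (i+1) 0 < k.getD i 0 ∧ k.getD (i+1) 0 < k.getD (i+2) 0)

lemma decompose_at (k : List ℝ) (i : ℕ) (h : i + 2 < k.length) :
    k = k.take i ++ k.getD i 0 :: k.getD (i+1) 0 :: k.getD (i+2) 0 :: k.drop (i+3) := by
  rw [List.getD_eq_getElem _ _ (by omega : i < k.length),
      List.getD_eq_getElem _ _ (by omega : i + 1 < k.length),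
      List.getD_eq_getElem _ _ (by omega : i + 2 < k.length)]
  conv_lhs => rw [← List.take_append_drop i k]
  congr 1
  rw [List.drop_eq_getElem_cons (by omega : i < k.length)]
  congr 1
  rw [List.drop_eq_getElem_cons (by omega : i + 1 < k.length)]
  congr 1
  rw [List.drop_eq_getElem_cons (by omega : i + 2 < k.length)]

lemma isClosed_ptClosed {k : List ℝ} (h : IsClosedConfig k) : PtClosed k := by
  intro i hi ⟨h1, h2⟩
  exact h ⟨k.take i, k.getD i 0, k.getD (i+1) 0, k.getD (i+2) 0, k.drop (i+3)⟩
    ⟨h1, h2⟩ (decompose_at k i hi).symm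

/- ================  chain lemma  ================ -/

lemma chain_decreasing {m : List ℝ} (hC : PtClosed m)
    (hne : ∀ i, i + 1 < m.length → m.getD i 0 ≠ m.getD (i+1) 0)
    (h0 : m.getD 1 0 < m.getD 0 0) :
    ∀ i, i + 1 < m.length → m.getD (i+1) 0 < m.getD i 0 := by
  intro i
  induction i with
  | zero => intro _; exact h0
  | succ i ih =>
    intro hlen
    have hprev := ih (by omega)
    have hcl := hC i (by omega)
    push_neg at hcl
    have := hcl hprev
    rcases lt_or_eq_of_le this with hlt | heq
    · exact hlt
    · exact absurd heq.symm (hne (i+1) (by omega))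

/- ================  lifting  ================ -/

def liftStep (bm bp : ℝ) (s : Step) : Step :=
  ⟨bm :: s.pre, s.a, s.b, s.c, s.post ++ [bp]⟩

lemma liftStep_src (bm bp : ℝ) (s : Step) :
    (liftStep bm bp s).src = bm :: s.src ++ [bp] := by
  simp [liftStep, Step.src]

lemma liftStep_tgt (bm bp : ℝ) (s : Step) :
    (liftStep bm bp s).tgt = bm :: s.tgt ++ [bp] := by
  simp [liftStep, Step.tgt]

lemma Reduces.lift {l s m} (bm bp : ℝ) (h : Reduces l s m) :
    Reduces (bm :: l ++ [bp]) (s.map (liftStep bm bp)) (bm :: m ++ [bp]) := by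
  induction h with
  | nil => exact Reduces.nil _
  | cons t ht h ih =>
    have hv : (liftStep bm bp t).Valid := ht
    have := Reduces.cons (liftStep bm bp t) hv (by rwa [liftStep_tgt])
    rwa [liftStep_src] at this

/- ================  endgame  ================ -/

lemma getD_take {m : List ℝ} {k i : ℕ} (h : i < k) (h2 : i < m.length) :
    (m.take k).getD i 0 = m.getD i 0 := by
  rw [List.getD_eq_getElem _ _ (by simp; omega), List.getD_eq_getElem _ _ h2]
  exact List.getElem_take

lemma decompose_last_two (m : List ℝ) (h : 2 ≤ m.length) :
    m = m.take (m.length - 2) ++ [m.getD (m.length - 2) 0, m.getD (m.length - 1) 0] := by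
  rw [List.getD_eq_getElem _ _ (by omega : m.length - 2 < m.length),
      List.getD_eq_getElem _ _ (by omega : m.length - 1 < m.length)]
  conv_lhs => rw [← List.take_append_drop (m.length - 2) m]
  congr 1
  rw [List.drop_eq_getElem_cons (by omega : m.length - 2 < m.length)]
  congr 1
  have h1 : m.length - 2 + 1 = m.length - 1 := by omega
  rw [h1, List.drop_eq_getElem_cons (by omega : m.length - 1 < m.length)]
  have h2 : m.length - 1 + 1 = m.length := by omega
  rw [h2, List.drop_length]

lemma endgame : ∀ n (m : List ℝ) (bm bp : ℝ), m.length = n → m.length % 2 = 1 →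
    (∀ x ∈ m, 0 < x) → PtClosed m →
    (∀ i, i + 1 < m.length → m.getD i 0 ≠ m.getD (i+1) 0) →
    redSum m < bm → redSum m < bp →
    ∃ st, Reduces (bm :: m ++ [bp]) st [bm + m.sum + bp] := by
  intro n
  induction n using Nat.strong_induction_on with
  | _ n IH =>
  intro m bm bp hlen hodd hpos hC hne hbm hbp
  match m with
  | [] => simp at hodd
  | [r] =>
    have hr : redSum [r] = r := redSum_singleton r
    have hrbm : r < bm := by rw [← hr]; exact hbm
    have hrbp : r < bp := by rw [← hr]; exact hbp
    refine ⟨[⟨[], bm, r, bp, []⟩], ?_⟩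
    have h2 : Reduces (Step.tgt ⟨[], bm, r, bp, []⟩) [] [bm + [r].sum + bp] := by
      have : Step.tgt ⟨[], bm, r, bp, []⟩ = [bm + [r].sum + bp] := by simp [Step.tgt]
      rw [this]; exact Reduces.nil _
    have := Reduces.cons _ (⟨hrbm, hrbp⟩ : Step.Valid ⟨[], bm, r, bp, []⟩) h2
    have hsrc : Step.src ⟨[], bm, r, bp, []⟩ = bm :: [r] ++ [bp] := by simp [Step.src]
    rwa [hsrc] at this
  | r₀ :: b₁ :: m₂ =>
    set M : List ℝ := r₀ :: b₁ :: m₂ with hM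
    have hr₀ : 0 < r₀ := hpos r₀ (by simp [hM])
    have hb₁ : 0 < b₁ := hpos b₁ (by simp [hM])
    have hm₂pos : ∀ x ∈ m₂, 0 < x := fun x hx => hpos x (by simp [hM, hx])
    have hm₂odd : m₂.length % 2 = 1 := by simp [hM] at hodd; omega
    have hrS : redSum M = r₀ + redSum m₂ := redSum_cons_cons r₀ b₁ m₂
    have hr₀S : r₀ ≤ redSum M := by
      rw [hrS]; linarith [redSum_nonneg hm₂pos]
    by_cases hlt : r₀ < b₁
    · -- left absorption
      obtain ⟨st', hst'⟩ := IH (n - 2) (by omega) m₂ (bm + r₀ + b₁) bp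
        (by simp [hM] at hlen; omega) hm₂odd hm₂pos
        (by intro i hi; have := hC (i + 2) (by simp [hM]; omega)
            simpa [hM, List.getD_cons_succ] using this)
        (by intro i hi; have := hne (i + 2) (by simp [hM]; omega)
            simpa [hM, List.getD_cons_succ] using this)
        (by rw [hrS] at hbm; linarith)
        (by rw [hrS] at hbp; linarith)
      refine ⟨⟨[], bm, r₀, b₁, m₂ ++ [bp]⟩ :: st', ?_⟩
      have htgt : Step.tgt ⟨[], bm, r₀, b₁, m₂ ++ [bp]⟩ = (bm + r₀ + b₁) :: m₂ ++ [bp] := by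
        simp [Step.tgt]
      have hfin : bm + r₀ + b₁ + m₂.sum + bp = bm + M.sum + bp := by simp [hM]; ring
      have h2 : Reduces (Step.tgt ⟨[], bm, r₀, b₁, m₂ ++ [bp]⟩) st' [bm + M.sum + bp] := by
        rw [htgt, ← hfin]; exact hst'
      have := Reduces.cons _ (⟨lt_of_le_of_lt hr₀S hbm, hlt⟩ :
        Step.Valid ⟨[], bm, r₀, b₁, m₂ ++ [bp]⟩) h2
      have hsrc : Step.src ⟨[], bm, r₀, b₁, m₂ ++ [bp]⟩ = bm :: M ++ [bp] := by
        simp [Step.src, hM]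
      rwa [hsrc] at this
    · -- right absorption
      have h10 : M.getD 1 0 < M.getD 0 0 := by
        have hne0 := hne 0 (by simp [hM])
        simp only [hM, List.getD_cons_zero, List.getD_cons_succ] at hne0 ⊢
        rcases lt_or_eq_of_le (not_lt.mp hlt) with h | h
        · exact h
        · exact absurd h.symm hne0
      have hchain := chain_decreasing hC hne h10
      have hlen3 : 3 ≤ M.length := by simp [hM]; have : m₂.length % 2 = 1 := hm₂odd; omega
      set u : List ℝ := M.take (M.length - 2) with hu
      set b : ℝ := M.getD (M.length - 2) 0 with hb
      set r : ℝ := M.getD (M.length - 1) 0 with hr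
      have hdec : M = u ++ [b, r] := decompose_last_two M (by omega)
      have hulen : u.length = M.length - 2 := by
        rw [hu, List.length_take]; omega
      have huodd : u.length % 2 = 1 := by rw [hulen]; omega
      have hupos : ∀ x ∈ u, 0 < x := fun x hx => hpos x (List.take_subset _ _ hx)
      have hrb : r < b := by
        have := hchain (M.length - 2) (by omega)
        have h1 : M.length - 2 + 1 = M.length - 1 := by omega
        rwa [h1] at this
      have hrS2 : redSum M = redSum u + r := by
        conv_lhs => rw [hdec]
        exact redSum_append_pair b r huodd
      have hrpos : 0 < r := hpos r (by rw [hdec]; simp)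
      have hbpos : 0 < b := hpos b (by rw [hdec]; simp)
      have hrle : r ≤ redSum M := by
        rw [hrS2]; linarith [redSum_nonneg hupos]
      have hrbp : r < bp := lt_of_le_of_lt hrle hbp
      obtain ⟨st', hst'⟩ := IH (n - 2) (by omega) u bm (b + r + bp)
        (by rw [hulen]; simp [hM] at hlen ⊢; omega) huodd hupos
        (by intro i hi
            rw [hulen] at hi
            have := hC i (by omega)
            rw [getD_take (by omega) (by omega), getD_take (by omega) (by omega),
                getD_take (by omega) (by omega)]
            exact this)
        (by intro i hi
            rw [hulen] at hi
            have := hne i (by omega)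
            rw [getD_take (by omega) (by omega), getD_take (by omega) (by omega)]
            exact this)
        (by linarith [hrS2 ▸ hbm])
        (by linarith [hrS2 ▸ hbp])
      refine ⟨⟨bm :: u, b, r, bp, []⟩ :: st', ?_⟩
      have htgt : Step.tgt ⟨bm :: u, b, r, bp, []⟩ = bm :: u ++ [b + r + bp] := by
        simp [Step.tgt]
      have hfin : bm + u.sum + (b + r + bp) = bm + M.sum + bp := by
        rw [hdec]; simp; ring
      have h2 : Reduces (Step.tgt ⟨bm :: u, b, r, bp, []⟩) st' [bm + M.sum + bp] := by
        rw [htgt, ← hfin]; exact hst'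
      have := Reduces.cons _ (⟨hrb, hrbp⟩ : Step.Valid ⟨bm :: u, b, r, bp, []⟩) h2
      have hsrc : Step.src ⟨bm :: u, b, r, bp, []⟩ = bm :: M ++ [bp] := by
        conv_rhs => rw [hdec]
        simp [Step.src]
      rwa [hsrc] at this

/-- If `B₋`, `B₊` are blue intervals and `C` is a red-ended
coloured-interval with `|B₋| > r(C)` and `|B₊| > r(C)`, then the closure of `B₋ + C + B₊`
is a single (blue) interval, of the full length. -/
theorem closure_eq_single_blue_interval
    (l : List ℝ) (bm bp : ℝ) (hodd : l.length % 2 = 1)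
    (hpos : ∀ x ∈ l, 0 < x) (hbm : 0 < bm) (hbp : 0 < bp)
    (hnd : Nondegenerate (bm :: l ++ [bp]))
    (s : List Step) (m : List ℝ) (h : Reduces l s m) (hc : IsClosedConfig m)
    (hgtm : redSum m < bm) (hgtp : redSum m < bp)
    (s' : List Step) (m' : List ℝ)
    (h' : Reduces (bm :: l ++ [bp]) s' m') (hc' : IsClosedConfig m') :
    m' = [bm + l.sum + bp] := by
  -- facts about m
  have hmodd : m.length % 2 = 1 := by have := h.length_eq; omega
  have hmpos : ∀ x ∈ m, 0 < x := h.pos hpos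
  have hmC : PtClosed m := isClosed_ptClosed hc
  have hmne : ∀ i, i + 1 < m.length → m.getD i 0 ≠ m.getD (i+1) 0 := adj_ne hnd h
  -- lift the reduction
  have R1 : Reduces (bm :: l ++ [bp]) (s.map (liftStep bm bp)) (bm :: m ++ [bp]) :=
    h.lift bm bp
  -- endgame
  obtain ⟨st2, R2⟩ := endgame m.length m bm bp rfl hmodd hmpos hmC hmne hgtm hgtp
  have hsum : m.sum = l.sum := h.sum_eq
  rw [hsum] at R2
  have R : Reduces (bm :: l ++ [bp]) (s.map (liftStep bm bp) ++ st2) [bm + l.sum + bp] :=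
    R1.append R2
  -- positivity of the flanked list
  have hfpos : ∀ x ∈ bm :: l ++ [bp], 0 < x := by
    intro x hx
    simp only [List.cons_append, List.mem_cons, List.mem_append, List.mem_singleton] at hx
    rcases hx with rfl | hx | hx
    · exact hbm
    · exact hpos x hx
    · simp at hx; exact hx ▸ hbp
  exact normal_unique (bm :: l ++ [bp]).length _ rfl hfpos h' R hc' (singleton_closed _)
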